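/- For every nonnegative integer n, ∑_{k=0}^{n} k²·H_{n-k}² = (n(n+1)(2n+1)/6)·H_{n+1}² − (1/18)(2n+1)(11n²+17n+3)·H_{n+1} + (1/108)(n+1)(170n²+109n+18). -/
import Mathlib


open Finset

/-- The harmonic number `H n = ∑_{k=1}^n 1/k`. -/
def H (n : ℕ) : ℚ := ∑ k ∈ Finset.range n, (1 : ℚ) / ((k : ℚ) + 1)

/-- The generalized harmonic number `H n ^ (m) = ∑_{k=1}^n 1/k^m`. -/
def Hgen (m n : ℕ) : ℚ := ∑ k ∈ Finset.range n, (1 : ℚ) / ((k : ℚ) + 1) ^ m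

lemma Hsucc (n : ℕ) : H (n + 1) = H n + 1 / ((n : ℚ) + 1) := by
  rw [H, Finset.sum_range_succ]; rfl

lemma lS0 (m : ℕ) : ∑ j ∈ Finset.range m, (H j) ^ 2 =
    (m : ℚ) * (H m) ^ 2 + (-2 * (m : ℚ) - 1) * H m + 2 * m := by
  induction m with
  | zero => simp [H]
  | succ m ih =>
    have hm : ((m : ℚ) + 1) ≠ 0 := by positivity
    rw [Finset.sum_range_succ, ih, Hsucc]
    push_cast
    field_simp
    ring

lemma lT1 (m : ℕ) : ∑ j ∈ Finset.range m, (j : ℚ) * (H j) ^ 2 =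
    (((m : ℚ) ^ 2 - m) / 2) * (H m) ^ 2 + ((-(m : ℚ) ^ 2 + m + 1) / 2) * H m
      + ((m : ℚ) ^ 2 - 3 * m) / 4 := by
  induction m with
  | zero => simp [H]
  | succ m ih =>
    have hm : ((m : ℚ) + 1) ≠ 0 := by positivity
    rw [Finset.sum_range_succ, ih, Hsucc]
    push_cast
    field_simp
    ring

lemma lT2 (m : ℕ) : ∑ j ∈ Finset.range m, (j : ℚ) ^ 2 * (H j) ^ 2 =
    ((2 * (m : ℚ) ^ 3 - 3 * (m : ℚ) ^ 2 + m) / 6) * (H m) ^ 2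
      + ((-4 * (m : ℚ) ^ 3 + 3 * (m : ℚ) ^ 2 + m - 3) / 18) * H m
      + (8 * (m : ℚ) ^ 3 - 15 * (m : ℚ) ^ 2 + 25 * m) / 108 := by
  induction m with
  | zero => simp [H]
  | succ m ih =>
    have hm : ((m : ℚ) + 1) ≠ 0 := by positivity
    rw [Finset.sum_range_succ, ih, Hsucc]
    push_cast
    field_simp
    ring

theorem stmt15 (n : ℕ) :
    ∑ k ∈ Finset.range (n + 1), (k : ℚ) ^ 2 * (H (n - k)) ^ 2 =
      ((n : ℚ) * ((n : ℚ) + 1) * (2 * (n : ℚ) + 1) / 6) * (H (n + 1)) ^ 2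
        - (1 / 18) * (2 * (n : ℚ) + 1) * (11 * (n : ℚ) ^ 2 + 17 * (n : ℚ) + 3) * H (n + 1)
        + (1 / 108) * ((n : ℚ) + 1) * (170 * (n : ℚ) ^ 2 + 109 * (n : ℚ) + 18) := by
  have key : ∑ k ∈ Finset.range (n + 1), (k : ℚ) ^ 2 * (H (n - k)) ^ 2 =
      ∑ j ∈ Finset.range (n + 1), ((n : ℚ) - (j : ℚ)) ^ 2 * (H j) ^ 2 := by
    rw [← Finset.sum_range_reflect (fun j => ((n : ℚ) - (j : ℚ)) ^ 2 * (H j) ^ 2)]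
    apply Finset.sum_congr rfl
    intro k hk
    have hk' : k ≤ n := by
      have := Finset.mem_range.mp hk; omega
    have hc : ((n + 1 - 1 - k : ℕ) : ℚ) = (n : ℚ) - k := by
      have : n + 1 - 1 - k = n - k := by omega
      rw [this, Nat.cast_sub hk']
    have hb : n + 1 - 1 - k = n - k := by omega
    simp only [hb]
    rw [Nat.cast_sub hk']
    ring
  rw [key]
  have expand : ∀ j ∈ Finset.range (n + 1), ((n : ℚ) - (j : ℚ)) ^ 2 * (H j) ^ 2 =
      (n : ℚ) ^ 2 * (H j) ^ 2 - 2 * n * ((j : ℚ) * (H j) ^ 2)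
        + (j : ℚ) ^ 2 * (H j) ^ 2 := fun j _ => by ring
  rw [Finset.sum_congr rfl expand, Finset.sum_add_distrib, Finset.sum_sub_distrib,
    ← Finset.mul_sum, ← Finset.mul_sum, lS0 (n + 1), lT1 (n + 1), lT2 (n + 1)]
  push_cast
  ring
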